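/- Let P and Q be finite subsets of ℝ², each in general position (no three points collinear), and let σ : P → Q be a bijection that preserves the sign of the orientation determinant of every triple of distinct points. Then for any subsets P₁, P₂ ⊆ P, the convex hulls conv(P₁) and conv(P₂) are disjoint if and only if conv(σ(P₁)) and conv(σ(P₂)) are disjoint. -/

import Mathlib

/-- Orientation determinant of an ordered triple of points in the plane. -/
def odet (x y z : Fin 2 → ℝ) : ℝ :=
  Matrix.det !![1, 1, 1; x 0, y 0, z 0; x 1, y 1, z 1]

/-- A finite planar point set is in general position if no three of its points are collinear. -/
def GenPos (S : Finset (Fin 2 → ℝ)) : Prop :=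
  ∀ p ∈ S, ∀ q ∈ S, ∀ r ∈ S, p ≠ q → p ≠ r → q ≠ r →
    ¬ Collinear ℝ ({p, q, r} : Set (Fin 2 → ℝ))

abbrev E2 := Fin 2 → ℝ
lemma odet_eq_cross (x y z : Fin 2 → ℝ) :
    odet x y z = (y 0 - x 0) * (z 1 - x 1) - (y 1 - x 1) * (z 0 - x 0) := by
  simp [odet, Matrix.det_fin_three]; ring

lemma odet_swap (x y z : Fin 2 → ℝ) : odet y x z = -odet x y z := by
  rw [odet_eq_cross, odet_eq_cross]; ring

lemma odet_affine (p q y : E2) :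
    odet p q y = (-(q 1 - p 1)) * y 0 + (q 0 - p 0) * y 1
      + ((q 1 - p 1) * p 0 - (q 0 - p 0) * p 1) := by
  rw [odet_eq_cross]; ring

lemma convex_odet_nonneg (p q : E2) : Convex ℝ {y : E2 | 0 ≤ odet p q y} := by
  have hlin : IsLinearMap ℝ (fun y : E2 => (-(q 1 - p 1)) * y 0 + (q 0 - p 0) * y 1) := by
    constructor
    · intro a b; simp; ring
    · intro c a; simp; ring
  have h : {y : E2 | 0 ≤ odet p q y}
      = {y : E2 | -((q 1 - p 1) * p 0 - (q 0 - p 0) * p 1)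
          ≤ (-(q 1 - p 1)) * y 0 + (q 0 - p 0) * y 1} := by
    ext y; rw [Set.mem_setOf_eq, Set.mem_setOf_eq, odet_affine]; constructor <;> intro <;> linarith
  rw [h]
  exact convex_halfSpace_ge hlin _

lemma aux_two {p q x : E2} {S₁ S₂ : Set E2} (h1 : S₁ ⊆ {p, q}) (h2 : S₂ ⊆ {p, q})
    (hd : S₁ ∩ S₂ = ∅) (hx1 : x ∈ convexHull ℝ S₁) (hx2 : x ∈ convexHull ℝ S₂) : p = q := by
  have hne1 : S₁.Nonempty := by
    rcases S₁.eq_empty_or_nonempty with h | h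
    · rw [h, convexHull_empty] at hx1; exact absurd hx1 (Set.notMem_empty x)
    · exact h
  have hne2 : S₂.Nonempty := by
    rcases S₂.eq_empty_or_nonempty with h | h
    · rw [h, convexHull_empty] at hx2; exact absurd hx2 (Set.notMem_empty x)
    · exact h
  have hdis : ∀ y, y ∈ S₁ → y ∉ S₂ := by
    intro y hy1 hy2
    have : y ∈ S₁ ∩ S₂ := ⟨hy1, hy2⟩
    rw [hd] at this; exact this
  have hsingle : ∀ (S : Set E2) (a : E2), S ⊆ {a} → x ∈ convexHull ℝ S → x = a := by
    intro S a hS hx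
    have := convexHull_mono hS hx
    rw [convexHull_singleton] at this
    exact this
  by_cases hp1 : p ∈ S₁
  · have hS2 : S₂ ⊆ {q} := by
      intro y hy
      rcases h2 hy with h | h
      · exact absurd hy (h ▸ hdis p hp1)
      · exact h
    obtain ⟨y2, hy2⟩ := hne2
    have hy2q : y2 = q := hS2 hy2
    have hq1 : q ∉ S₁ := fun h => hdis q h (hy2q ▸ hy2)
    have hS1 : S₁ ⊆ {p} := by
      intro y hy
      rcases h1 hy with h | h
      · exact h
      · exact absurd hy (h ▸ hq1)
    rw [← hsingle S₁ p hS1 hx1, ← hsingle S₂ q hS2 hx2]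
  · have hS1 : S₁ ⊆ {q} := by
      intro y hy
      rcases h1 hy with h | h
      · exact absurd hy (h ▸ hp1)
      · exact h
    obtain ⟨y1, hy1⟩ := hne1
    have hq2 : q ∉ S₂ := fun h => hdis q (hS1 hy1 ▸ hy1) h
    have hS2 : S₂ ⊆ {p} := by
      intro y hy
      rcases h2 hy with h | h
      · exact h
      · exact absurd hy (h ▸ hq2)
    rw [← hsingle S₁ q hS1 hx1, ← hsingle S₂ p hS2 hx2]
lemma collinear_of_odet_eq_zero {p q r : Fin 2 → ℝ} (hpq : p ≠ q) (h : odet p q r = 0) :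
    Collinear ℝ ({p, q, r} : Set (Fin 2 → ℝ)) := by
  rw [odet_eq_cross] at h
  have hu : q - p ≠ 0 := sub_ne_zero.2 (Ne.symm hpq)
  have hk : (q 0 - p 0)^2 + (q 1 - p 1)^2 ≠ 0 := by
    intro h0
    apply hu
    have h1 : q 0 - p 0 = 0 := by nlinarith [sq_nonneg (q 0 - p 0), sq_nonneg (q 1 - p 1)]
    have h2 : q 1 - p 1 = 0 := by nlinarith [sq_nonneg (q 0 - p 0), sq_nonneg (q 1 - p 1)]
    funext i; fin_cases i <;> simp_all
  set c : ℝ := ((q 0 - p 0) * (r 0 - p 0) + (q 1 - p 1) * (r 1 - p 1)) /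
      ((q 0 - p 0)^2 + (q 1 - p 1)^2) with hc
  have hr : r = AffineMap.lineMap p q c := by
    funext i
    have hl : (AffineMap.lineMap p q c : Fin 2 → ℝ) i = c * (q i - p i) + p i := by
      simp [AffineMap.lineMap_apply]
    rw [hl, hc]
    fin_cases i
    · simp only [Fin.zero_eta, Fin.mk_one, Fin.isValue]; field_simp
      linear_combination (-(q 1 - p 1)) * h
    · simp only [Fin.zero_eta, Fin.mk_one, Fin.isValue]; field_simp
      linear_combination (q 0 - p 0) * h
  have : r ∈ line[ℝ, p, q] := hr ▸ AffineMap.lineMap_mem_affineSpan_pair c p q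
  have hcol := collinear_insert_of_mem_affineSpan_pair this
  have : ({p, q, r} : Set (Fin 2 → ℝ)) = {r, p, q} := by
    ext w; simp [Set.mem_insert_iff]; tauto
  rw [this]; exact hcol

lemma face_lemma (A : Set E2) (hA : A.Finite) (α β γ : ℝ) (x : E2)
    (hx : x ∈ convexHull ℝ A)
    (hnn : ∀ y ∈ A, 0 ≤ α * y 0 + β * y 1 + γ)
    (hx0 : α * x 0 + β * x 1 + γ = 0) :
    x ∈ convexHull ℝ (A ∩ {y | α * y 0 + β * y 1 + γ = 0}) := by
  classical
  set s : Finset E2 := hA.toFinset with hs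
  have hAs : A = ↑s := by simp [hs]
  rw [hAs, Finset.convexHull_eq] at hx
  obtain ⟨w, hw0, hw1, hwx⟩ := hx
  have hxi : ∀ i, x i = ∑ y ∈ s, w y * y i := by
    intro i
    rw [← hwx]
    simp [Finset.centerMass, hw1, Finset.sum_apply]
  have hsum : ∑ y ∈ s, w y * (α * y 0 + β * y 1 + γ) = 0 := by
    have h : ∑ y ∈ s, w y * (α * y 0 + β * y 1 + γ)
        = α * ∑ y ∈ s, w y * y 0 + β * ∑ y ∈ s, w y * y 1 + γ * ∑ y ∈ s, w y := by
      rw [Finset.mul_sum, Finset.mul_sum, Finset.mul_sum,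
        ← Finset.sum_add_distrib, ← Finset.sum_add_distrib]
      exact Finset.sum_congr rfl fun y _ => by ring
    rw [h, hw1, mul_one, ← hxi 0, ← hxi 1, hx0]
  have hterm : ∀ y ∈ s, w y * (α * y 0 + β * y 1 + γ) = 0 :=
    (Finset.sum_eq_zero_iff_of_nonneg
      (fun y hy => mul_nonneg (hw0 y hy) (hnn y (by rw [hAs]; exact hy)))).1 hsum
  have hkey : ∀ y ∈ s, w y ≠ 0 → α * y 0 + β * y 1 + γ = 0 := by
    intro y hy hwy
    rcases mul_eq_zero.1 (hterm y hy) with h | h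
    · exact absurd h hwy
    · exact h
  set s' : Finset E2 := s.filter (fun y => α * y 0 + β * y 1 + γ = 0) with hs'
  have hsum' : ∑ y ∈ s', w y = 1 := by
    rw [hs', Finset.sum_filter_of_ne hkey, hw1]
  have hx' : s'.centerMass w id = x := by
    rw [← hwx]
    simp only [Finset.centerMass, hsum', hw1, inv_one, one_smul]
    rw [hs']
    apply Finset.sum_filter_of_ne
    intro y hy h
    apply hkey y hy
    intro h0
    exact h (by rw [h0, zero_smul])
  rw [← hx']
  apply Finset.centerMass_mem_convexHull
  · intro y hy; exact hw0 y (Finset.mem_filter.1 hy).1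
  · rw [hsum']; norm_num
  · intro y hy
    rcases Finset.mem_filter.1 hy with ⟨hy1, hy2⟩
    exact ⟨by rw [hAs]; exact hy1, hy2⟩

lemma sep_disjoint (P : Finset E2) (hP : GenPos P) (P₁ P₂ : Set E2)
    (h1 : P₁ ⊆ ↑P) (h2 : P₂ ⊆ ↑P) (hd : P₁ ∩ P₂ = ∅) (p q : E2)
    (hp : p ∈ P₁ ∪ P₂) (hq : q ∈ P₁ ∪ P₂) (hpq : p ≠ q)
    (hA : ∀ a ∈ P₁, 0 ≤ odet p q a) (hB : ∀ b ∈ P₂, odet p q b ≤ 0) :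
    convexHull ℝ P₁ ∩ convexHull ℝ P₂ = ∅ := by
  have hpP : p ∈ (P : Set E2) := (Set.union_subset h1 h2) hp
  have hqP : q ∈ (P : Set E2) := (Set.union_subset h1 h2) hq
  by_contra hcon
  obtain ⟨x, hx1, hx2⟩ := Set.nonempty_iff_ne_empty.2 hcon
  have hL1 : 0 ≤ odet p q x :=
    convexHull_min hA (convex_odet_nonneg p q) hx1
  have hL2 : odet p q x ≤ 0 := by
    have hsub : P₂ ⊆ {y : E2 | 0 ≤ odet q p y} := by
      intro b hb; rw [Set.mem_setOf_eq, odet_swap]; linarith [hB b hb]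
    have := convexHull_min hsub (convex_odet_nonneg q p) hx2
    rw [Set.mem_setOf_eq, odet_swap] at this; linarith
  have hLx : odet p q x = 0 := le_antisymm hL2 hL1
  -- face lemma for P₁
  set α : ℝ := -(q 1 - p 1)
  set β : ℝ := q 0 - p 0
  set γ : ℝ := (q 1 - p 1) * p 0 - (q 0 - p 0) * p 1
  have hform : ∀ y : E2, odet p q y = α * y 0 + β * y 1 + γ := fun y => odet_affine p q y
  have hfin1 : P₁.Finite := Set.Finite.subset P.finite_toSet h1
  have hfin2 : P₂.Finite := Set.Finite.subset P.finite_toSet h2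
  have hface1 : x ∈ convexHull ℝ (P₁ ∩ {y | odet p q y = 0}) := by
    have := face_lemma P₁ hfin1 α β γ x hx1
      (fun y hy => by rw [← hform y]; exact hA y hy) (by rw [← hform x]; exact hLx)
    refine convexHull_mono ?_ this
    intro y hy
    exact ⟨hy.1, by rw [Set.mem_setOf_eq, hform y]; exact hy.2⟩
  have hface2 : x ∈ convexHull ℝ (P₂ ∩ {y | odet p q y = 0}) := by
    have := face_lemma P₂ hfin2 (-α) (-β) (-γ) x hx2
      (fun y hy => by have := hB y hy; rw [hform y] at this; linarith)
      (by rw [hform x] at hLx; linarith)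
    refine convexHull_mono ?_ this
    intro y hy
    refine ⟨hy.1, ?_⟩
    have := hy.2
    rw [Set.mem_setOf_eq] at this ⊢
    rw [hform y]; linarith
  have hsub : ∀ (S : Set E2), S ⊆ ↑P → S ∩ {y | odet p q y = 0} ⊆ {p, q} := by
    intro S hS y hy
    by_contra hny
    rw [Set.mem_insert_iff, Set.mem_singleton_iff] at hny
    push_neg at hny
    obtain ⟨hyp, hyq⟩ := hny
    exact hP p hpP q hqP y (hS hy.1) hpq (Ne.symm hyp) (Ne.symm hyq)
      (collinear_of_odet_eq_zero hpq hy.2)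
  have hdis : (P₁ ∩ {y | odet p q y = 0}) ∩ (P₂ ∩ {y | odet p q y = 0}) = ∅ := by
    rw [← Set.subset_empty_iff]
    intro y hy
    rw [← hd]; exact ⟨hy.1.1, hy.2.1⟩
  exact hpq (aux_two (hsub P₁ h1) (hsub P₂ h2) hdis hface1 hface2)

lemma odet_self₁ (x y : Fin 2 → ℝ) : odet x y x = 0 := by rw [odet_eq_cross]; ring

lemma odet_self₂ (x y : Fin 2 → ℝ) : odet x y y = 0 := by rw [odet_eq_cross]; ring

lemma disjoint_sep (P : Finset E2) (hP : GenPos P) (P₁ P₂ : Set E2)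
    (h1 : P₁ ⊆ ↑P) (h2 : P₂ ⊆ ↑P) (hne1 : P₁.Nonempty) (hne2 : P₂.Nonempty)
    (hdisj : convexHull ℝ P₁ ∩ convexHull ℝ P₂ = ∅) :
    ∃ p ∈ P₁ ∪ P₂, ∃ q ∈ P₁ ∪ P₂, p ≠ q ∧
      (∀ a ∈ P₁, 0 ≤ odet p q a) ∧ (∀ b ∈ P₂, odet p q b ≤ 0) := by
  have hfin1 : P₁.Finite := Set.Finite.subset P.finite_toSet h1
  have hfin2 : P₂.Finite := Set.Finite.subset P.finite_toSet h2
  obtain ⟨f, u, v, hfu, huv, hvf⟩ :=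
    geometric_hahn_banach_compact_closed (convex_convexHull ℝ P₁)
      (hfin1.isCompact_convexHull (𝕜 := ℝ)) (convex_convexHull ℝ P₂)
      (hfin2.isCompact_convexHull (𝕜 := ℝ)).isClosed
      (Set.disjoint_iff_inter_eq_empty.2 hdisj)
  have hfu' : ∀ a ∈ P₁, f a < u := fun a ha => hfu a (subset_convexHull ℝ P₁ ha)
  have hvf' : ∀ b ∈ P₂, v < f b := fun b hb => hvf b (subset_convexHull ℝ P₂ hb)
  set c0 : ℝ := f (Pi.single 0 1) with hc0
  set c1 : ℝ := f (Pi.single 1 1) with hc1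
  have hfx : ∀ x : E2, f x = x 0 * c0 + x 1 * c1 := by
    intro x
    have hx : x = x 0 • (Pi.single 0 1 : E2) + x 1 • (Pi.single 1 1 : E2) := by
      funext i; fin_cases i <;> simp
    calc f x = f (x 0 • (Pi.single 0 1 : E2) + x 1 • (Pi.single 1 1 : E2)) := by rw [← hx]
    _ = x 0 * c0 + x 1 * c1 := by
        rw [map_add, map_smul, map_smul, smul_eq_mul, smul_eq_mul]
  -- k positive
  obtain ⟨a0, ha0⟩ := hne1
  obtain ⟨b0, hb0⟩ := hne2
  have hk : 0 < c0 ^ 2 + c1 ^ 2 := by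
    rcases eq_or_ne c0 0 with h0 | h0
    · rcases eq_or_ne c1 0 with h01 | h01
      · exfalso
        have hfa : f a0 = 0 := by rw [hfx, h0, h01]; ring
        have hfb : f b0 = 0 := by rw [hfx, h0, h01]; ring
        have := hfu' a0 ha0
        have := hvf' b0 hb0
        rw [hfa] at *; rw [hfb] at *; linarith
      · have : 0 < c1 ^ 2 := by positivity
        nlinarith [sq_nonneg c0]
    · have : 0 < c0 ^ 2 := by positivity
      nlinarith [sq_nonneg c1]
  set k : ℝ := c0 ^ 2 + c1 ^ 2 with hkdef
  -- max of f over P₁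
  obtain ⟨p, hpmem, hpmax⟩ := Set.exists_max_image P₁ (fun y => f y) hfin1 ⟨a0, ha0⟩
  set F : E2 → ℝ := fun y => c0 * (y 0 - p 0) + c1 * (y 1 - p 1) with hFdef
  set G : E2 → ℝ := fun y => -c1 * (y 0 - p 0) + c0 * (y 1 - p 1) with hGdef
  have hFf : ∀ y, F y = f y - f p := by
    intro y; rw [hFdef]; simp only; rw [hfx y, hfx p]; ring
  have hkey : ∀ y z : E2, k * odet p y z = F y * G z - G y * F z := by
    intro y z
    rw [odet_eq_cross, hkdef, hFdef, hGdef]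
    simp only
    ring
  have hFa : ∀ a ∈ P₁, F a ≤ 0 := by
    intro a ha; rw [hFf]; have := hpmax a ha; linarith
  have hFb : ∀ b ∈ P₂, 0 < F b := by
    intro b hb; rw [hFf]
    have h1' := hfu' p hpmem
    have h2' := hvf' b hb
    linarith
  have hFp : F p = 0 := by rw [hFf]; ring
  have hpP2 : p ∉ P₂ := fun h => by have := hFb p h; rw [hFp] at this; exact lt_irrefl 0 this
  have hzero_eq : ∀ y : E2, F y = 0 → G y = 0 → y = p := by
    intro y hFy hGy
    rw [hFdef] at hFy; rw [hGdef] at hGy; simp only at hFy hGy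
    have h0 : k * (y 0 - p 0) = c0 * (c0 * (y 0 - p 0) + c1 * (y 1 - p 1))
        - c1 * (-c1 * (y 0 - p 0) + c0 * (y 1 - p 1)) := by rw [hkdef]; ring
    have h1 : k * (y 1 - p 1) = c1 * (c0 * (y 0 - p 0) + c1 * (y 1 - p 1))
        + c0 * (-c1 * (y 0 - p 0) + c0 * (y 1 - p 1)) := by rw [hkdef]; ring
    rw [hFy, hGy] at h0 h1
    simp only [mul_zero, zero_sub, neg_zero, add_zero, zero_add] at h0 h1
    have hy0 : y 0 = p 0 := by
      have := mul_eq_zero.1 h0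
      rcases this with h | h
      · exact absurd h (ne_of_gt hk)
      · linarith
    have hy1 : y 1 = p 1 := by
      have := mul_eq_zero.1 h1
      rcases this with h | h
      · exact absurd h (ne_of_gt hk)
      · linarith
    funext i; fin_cases i <;> assumption
  by_cases hex : ∃ a ∈ P₁, a ≠ p ∧ F a = 0
  · -- two maximizers case: line through p and a
    obtain ⟨a, ha1, hanep, hFa0⟩ := hex
    have hGa : G a ≠ 0 := fun h => hanep (hzero_eq a hFa0 h)
    have hkey' : ∀ r : E2, k * odet p a r = -(G a) * F r := by
      intro r; rw [hkey a r, hFa0]; ring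
    rcases hGa.lt_or_gt with hGaneg | hGapos
    · refine ⟨a, Or.inl ha1, p, Or.inl hpmem, hanep, ?_, ?_⟩
      · intro r hr
        have h := hkey' r
        have hFr := hFa r hr
        have hsw : odet a p r = -odet p a r := odet_swap p a r
        nlinarith [h, hk, hFr]
      · intro r hr
        have h := hkey' r
        have hFr := hFb r hr
        have hsw : odet a p r = -odet p a r := odet_swap p a r
        nlinarith [h, hk, hFr]
    · refine ⟨p, Or.inl hpmem, a, Or.inl ha1, Ne.symm hanep, ?_, ?_⟩
      · intro r hr
        have h := hkey' r
        have hFr := hFa r hr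
        nlinarith [h, hk, hFr]
      · intro r hr
        have h := hkey' r
        have hFr := hFb r hr
        nlinarith [h, hk, hFr]
  · -- rotating line case
    push_neg at hex
    have hFa' : ∀ a ∈ P₁, a ≠ p → F a < 0 := fun a ha hap =>
      lt_of_le_of_ne (hFa a ha) (hex a ha hap)
    set S : Set E2 := (P₁ ∪ P₂) \ {p} with hSdef
    have hSP : S ⊆ ↑P := fun r hr => (Set.union_subset h1 h2) hr.1
    have hSfin : S.Finite := Set.Finite.subset P.finite_toSet hSP
    have hb0S : b0 ∈ S := ⟨Or.inr hb0, fun h => hpP2 (h ▸ hb0)⟩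
    have hFS : ∀ r ∈ S, F r ≠ 0 := by
      intro r hr
      rcases hr.1 with h | h
      · exact ne_of_lt (hFa' r h (fun hh => hr.2 hh))
      · exact ne_of_gt (hFb r h)
    set t : E2 → ℝ := fun r => G r / F r with htdef
    obtain ⟨q, hqS, hqmax⟩ := Set.exists_max_image S t hSfin ⟨b0, hb0S⟩
    have hqne : q ≠ p := fun h => hqS.2 h
    have hFq : F q ≠ 0 := hFS q hqS
    have hpP : p ∈ (P : Set E2) := h1 hpmem
    have hstrict : ∀ r ∈ S, r ≠ q → t r < t q := by
      intro r hr hrq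
      rcases (hqmax r hr).lt_or_eq with h | h
      · exact h
      · exfalso
        have hcross : G r * F q = G q * F r := by
          have := h
          rw [htdef] at this
          simp only at this
          field_simp [hFS r hr, hFq] at this
          linarith [this]
        have h0 : k * odet p q r = 0 := by rw [hkey q r]; linarith [hcross]
        have h0' : odet p q r = 0 := by
          rcases mul_eq_zero.1 h0 with h | h
          · exact absurd h (ne_of_gt hk)
          · exact h
        exact hP p hpP q (hSP hqS) r (hSP hr) (Ne.symm hqne) (Ne.symm (fun hh => hr.2 hh))
          (Ne.symm hrq) (collinear_of_odet_eq_zero (Ne.symm hqne) h0')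
    have hmain : ∀ r ∈ S, r ≠ q → k * odet p q r = F q * F r * (t r - t q) := by
      intro r hr hrq
      have hGr : G r = t r * F r := by
        rw [htdef]; simp only; rw [div_mul_cancel₀ _ (hFS r hr)]
      have hGq : G q = t q * F q := by
        rw [htdef]; simp only; rw [div_mul_cancel₀ _ hFq]
      rw [hkey q r, hGr, hGq]; ring
    rcases hFq.lt_or_gt with hFqneg | hFqpos
    · -- use (q, p)
      refine ⟨q, hqS.1, p, Or.inl hpmem, Ne.symm hqne.symm, ?_, ?_⟩
      · intro r hr
        rcases eq_or_ne r p with rfl | hrp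
        · rw [odet_self₂]
        rcases eq_or_ne r q with rfl | hrq
        · rw [odet_self₁]
        have hrS : r ∈ S := ⟨Or.inl hr, hrp⟩
        have h := hmain r hrS hrq
        have hFr := hFa' r hr hrp
        have hts := hstrict r hrS hrq
        have hsw : odet q p r = -odet p q r := odet_swap p q r
        nlinarith [h, hk, mul_neg_of_pos_of_neg (mul_pos_of_neg_of_neg hFqneg hFr) (sub_neg.2 hts)]
      · intro r hr
        rcases eq_or_ne r q with rfl | hrq
        · rw [odet_self₁]
        have hrp : r ≠ p := fun h => hpP2 (h ▸ hr)
        have hrS : r ∈ S := ⟨Or.inr hr, hrp⟩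
        have h := hmain r hrS hrq
        have hFr := hFb r hr
        have hts := hstrict r hrS hrq
        have hsw : odet q p r = -odet p q r := odet_swap p q r
        nlinarith [h, hk, mul_pos (mul_pos (neg_pos.2 hFqneg) hFr) (sub_pos.2 hts)]
    · -- use (p, q)
      refine ⟨p, Or.inl hpmem, q, hqS.1, hqne.symm, ?_, ?_⟩
      · intro r hr
        rcases eq_or_ne r p with rfl | hrp
        · rw [odet_self₁]
        rcases eq_or_ne r q with rfl | hrq
        · rw [odet_self₂]
        have hrS : r ∈ S := ⟨Or.inl hr, hrp⟩
        have h := hmain r hrS hrq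
        have hFr := hFa' r hr hrp
        have hts := hstrict r hrS hrq
        nlinarith [h, hk, mul_pos hFqpos (mul_pos_of_neg_of_neg hFr (sub_neg.2 hts))]
      · intro r hr
        rcases eq_or_ne r q with rfl | hrq
        · rw [odet_self₂]
        have hrp : r ≠ p := fun h => hpP2 (h ▸ hr)
        have hrS : r ∈ S := ⟨Or.inr hr, hrp⟩
        have h := hmain r hrS hrq
        have hFr := hFb r hr
        have hts := hstrict r hrS hrq
        nlinarith [h, hk, mul_neg_of_pos_of_neg (mul_pos hFqpos hFr) (sub_neg.2 hts)]

/-- Separation condition. -/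
def SepCond (P₁ P₂ : Set E2) : Prop :=
  P₁ = ∅ ∨ P₂ = ∅ ∨ (P₁ ∩ P₂ = ∅ ∧ ∃ p ∈ P₁ ∪ P₂, ∃ q ∈ P₁ ∪ P₂, p ≠ q ∧
    (∀ a ∈ P₁, 0 ≤ odet p q a) ∧ ∀ b ∈ P₂, odet p q b ≤ 0)

theorem hull_disjoint_iff_sep (P : Finset E2) (hP : GenPos P) (P₁ P₂ : Set E2)
    (h1 : P₁ ⊆ ↑P) (h2 : P₂ ⊆ ↑P) :
    convexHull ℝ P₁ ∩ convexHull ℝ P₂ = ∅ ↔ SepCond P₁ P₂ := by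
  constructor
  · intro hd
    rcases P₁.eq_empty_or_nonempty with he1 | hne1
    · exact Or.inl he1
    rcases P₂.eq_empty_or_nonempty with he2 | hne2
    · exact Or.inr (Or.inl he2)
    have hdP : P₁ ∩ P₂ = ∅ := by
      rw [← Set.subset_empty_iff]
      intro x hx
      rw [← hd]
      exact ⟨subset_convexHull ℝ P₁ hx.1, subset_convexHull ℝ P₂ hx.2⟩
    exact Or.inr (Or.inr ⟨hdP, disjoint_sep P hP P₁ P₂ h1 h2 hne1 hne2 hd⟩)
  · rintro (h | h | ⟨hdP, p, hp, q, hq, hpq, hA, hB⟩)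
    · rw [h, convexHull_empty, Set.empty_inter]
    · rw [h, convexHull_empty, Set.inter_empty]
    · exact sep_disjoint P hP P₁ P₂ h1 h2 hdP p q hp hq hpq hA hB

lemma sign_eq_nonneg {a b : ℝ} (h : Real.sign a = Real.sign b) (ha : 0 ≤ a) : 0 ≤ b := by
  by_contra hb
  push_neg at hb
  rw [Real.sign_of_neg hb] at h
  rcases eq_or_lt_of_le ha with h0 | h0
  · rw [← h0, Real.sign_zero] at h; norm_num at h
  · rw [Real.sign_of_pos h0] at h; norm_num at h

lemma sign_eq_nonpos {a b : ℝ} (h : Real.sign a = Real.sign b) (ha : a ≤ 0) : b ≤ 0 := by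
  by_contra hb
  push_neg at hb
  rw [Real.sign_of_pos hb] at h
  rcases eq_or_lt_of_le ha with h0 | h0
  · rw [h0, Real.sign_zero] at h; norm_num at h
  · rw [Real.sign_of_neg h0] at h; norm_num at h

theorem convexHull_disjoint_iff_of_orientation_preserving
    (P Q : Finset (Fin 2 → ℝ)) (hP : GenPos P) (hQ : GenPos Q)
    (σ : (Fin 2 → ℝ) → (Fin 2 → ℝ)) (hσ : Set.BijOn σ ↑P ↑Q)
    (hor : ∀ x ∈ P, ∀ y ∈ P, ∀ z ∈ P, x ≠ y → x ≠ z → y ≠ z →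
      Real.sign (odet x y z) = Real.sign (odet (σ x) (σ y) (σ z)))
    (P₁ P₂ : Set (Fin 2 → ℝ)) (h1 : P₁ ⊆ ↑P) (h2 : P₂ ⊆ ↑P) :
    convexHull ℝ P₁ ∩ convexHull ℝ P₂ = ∅ ↔
      convexHull ℝ (σ '' P₁) ∩ convexHull ℝ (σ '' P₂) = ∅ := by
  have himg1 : σ '' P₁ ⊆ ↑Q := by
    rw [← hσ.image_eq]; exact Set.image_mono h1
  have himg2 : σ '' P₂ ⊆ ↑Q := by
    rw [← hσ.image_eq]; exact Set.image_mono h2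
  have hinj := hσ.injOn
  -- the sign transfer
  have hiff : ∀ x ∈ (P : Set E2), ∀ y ∈ (P : Set E2), ∀ z ∈ (P : Set E2), x ≠ y →
      ((0 ≤ odet x y z ↔ 0 ≤ odet (σ x) (σ y) (σ z)) ∧
        (odet x y z ≤ 0 ↔ odet (σ x) (σ y) (σ z) ≤ 0)) := by
    intro x hx y hy z hz hxy
    rcases eq_or_ne z x with rfl | hzx
    · rw [odet_self₁, odet_self₁]; simp
    rcases eq_or_ne z y with rfl | hzy
    · rw [odet_self₂, odet_self₂]; simp
    have hs := hor x hx y hy z hz hxy (Ne.symm hzx) (Ne.symm hzy)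
    exact ⟨⟨sign_eq_nonneg hs, sign_eq_nonneg hs.symm⟩,
      ⟨sign_eq_nonpos hs, sign_eq_nonpos hs.symm⟩⟩
  rw [hull_disjoint_iff_sep P hP P₁ P₂ h1 h2,
    hull_disjoint_iff_sep Q hQ (σ '' P₁) (σ '' P₂) himg1 himg2]
  unfold SepCond
  have hU : P₁ ∪ P₂ ⊆ (P : Set E2) := Set.union_subset h1 h2
  apply or_congr Set.image_eq_empty.symm
  apply or_congr Set.image_eq_empty.symm
  apply and_congr
  · rw [← hinj.image_inter h1 h2, Set.image_eq_empty]
  · constructor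
    · rintro ⟨p, hp, q, hq, hpq, hA, hB⟩
      have hpP : p ∈ (P : Set E2) := hU hp
      have hqP : q ∈ (P : Set E2) := hU hq
      refine ⟨σ p, ?_, σ q, ?_, fun h => hpq (hinj hpP hqP h), ?_, ?_⟩
      · rcases hp with h | h
        · exact Or.inl (Set.mem_image_of_mem σ h)
        · exact Or.inr (Set.mem_image_of_mem σ h)
      · rcases hq with h | h
        · exact Or.inl (Set.mem_image_of_mem σ h)
        · exact Or.inr (Set.mem_image_of_mem σ h)
      · rintro a' ⟨a, ha, rfl⟩
        exact ((hiff p hpP q hqP a (h1 ha) hpq).1).1 (hA a ha)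
      · rintro b' ⟨b, hb, rfl⟩
        exact ((hiff p hpP q hqP b (h2 hb) hpq).2).1 (hB b hb)
    · rintro ⟨p', hp', q', hq', hpq', hA', hB'⟩
      have hp'' : p' ∈ σ '' (P₁ ∪ P₂) := by rw [Set.image_union]; exact hp'
      have hq'' : q' ∈ σ '' (P₁ ∪ P₂) := by rw [Set.image_union]; exact hq'
      obtain ⟨p, hp, rfl⟩ := hp''
      obtain ⟨q, hq, rfl⟩ := hq''
      have hpP : p ∈ (P : Set E2) := hU hp
      have hqP : q ∈ (P : Set E2) := hU hq
      have hpq : p ≠ q := fun h => hpq' (h ▸ rfl)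
      refine ⟨p, hp, q, hq, hpq, ?_, ?_⟩
      · intro a ha
        exact ((hiff p hpP q hqP a (h1 ha) hpq).1).2 (hA' (σ a) (Set.mem_image_of_mem σ ha))
      · intro b hb
        exact ((hiff p hpP q hqP b (h2 hb) hpq).2).2 (hB' (σ b) (Set.mem_image_of_mem σ hb))
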